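/- Let m, n be coprime and let a be an integer with a·n ≡ −1 (mod m). The map sending a word [p_1, ..., p_n] of distinct integers (the column-removal levels of a parking (m,n)-filter tuple, shifted so the minimum is 0) to [a·p_1 mod m, ..., a·p_n mod m] produces an (m,n)-parking word; in particular, for a weakly increasing (m,n)-Dyck filter with column-minima levels n(𝔡) = [q_0, ..., q_{n-1}] (one per residue class mod n, minimum 0), the word [a·q_0 mod m, ..., a·q_{n-1} mod m], when sorted, is the (m,n)-Dyck word recording the column lengths of the associated Dyck path. -/

import Mathlib

def IsParkingWord (m n : ℕ) (p : Fin n → ℕ) : Prop :=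
  (∀ j, p j < m) ∧
  ∀ i : ℕ, 1 ≤ i → i ≤ m →
    i * n ≤ m * (Finset.univ.filter (fun j => p j < i)).card

/-- Let `D` list the column-minimal levels of a Dyck (m,n)-filter: `n` nonnegative
integers, one from each residue class mod `n`, with minimum `0`, whose generated
level set is closed under adding `m`.  With `a·n ≡ -1 (mod m)`, the word
`i ↦ a·D i mod m` is an (m,n)-parking word, and its weakly increasing
rearrangement is an (m,n)-Dyck word (the Dyck word of the associated Dyck path). -/
theorem anderson_map_is_parking_word (m n : ℕ) (hm : 0 < m) (hn : 0 < n)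
    (hcop : Nat.Coprime m n) (a : ℤ) (ha : (m : ℤ) ∣ a * (n : ℤ) + 1)
    (D : Fin n → ℤ)
    (hpos : ∀ i, 0 ≤ D i) (hzero : ∃ i, D i = 0)
    (hres : ∀ i j : Fin n, (n : ℤ) ∣ (D i - D j) → i = j)
    (hclosed : ∀ i, ∃ j : Fin n, ∃ k : ℕ, D i + (m : ℤ) = D j + (k : ℤ) * (n : ℤ)) :
    IsParkingWord m n (fun i => ((a * D i) % (m : ℤ)).toNat) ∧
    IsParkingWord m n ((fun i => ((a * D i) % (m : ℤ)).toNat) ∘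
      Tuple.sort (fun i => ((a * D i) % (m : ℤ)).toNat)) ∧
    Monotone ((fun i => ((a * D i) % (m : ℤ)).toNat) ∘
      Tuple.sort (fun i => ((a * D i) % (m : ℤ)).toNat)) := by
  obtain ⟨j0, hj0⟩ := hzero
  choose σ k hk using hclosed
  set p : Fin n → ℕ := fun i => ((a * D i) % (m : ℤ)).toNat with hp
  have hmZ : (0:ℤ) < m := by exact_mod_cast hm
  have hbound : ∀ j, p j < m := by
    intro j
    have h1 : 0 ≤ (a * D j) % m := Int.emod_nonneg _ (by omega)
    have h2 : (a * D j) % m < m := Int.emod_lt_of_pos _ hmZ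
    simp only [hp]
    omega
  -- the iterated closure map
  set J : ℕ → Fin n := fun t => σ^[t] j0 with hJ
  set K : ℕ → ℕ := fun t => ∑ s ∈ Finset.range t, k (J s) with hKdef
  have hJs : ∀ t, J (t+1) = σ (J t) := fun t => Function.iterate_succ_apply' σ t j0
  have hKs : ∀ t, K (t+1) = K t + k (J t) := fun t => Finset.sum_range_succ _ t
  have hDJ : ∀ t, D (J t) + (K t : ℤ) * n = (t : ℤ) * m := by
    intro t; induction t with
    | zero => simp [hJ, hKdef, hj0]
    | succ t ih =>
      rw [hJs, hKs]
      have h := hk (J t)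
      push_cast
      push_cast at ih
      linarith
  have hKle : ∀ t, (K t : ℤ) * n ≤ (t : ℤ) * m := by
    intro t
    have := hpos (J t)
    linarith [hDJ t]
  have hpJ : ∀ t, t < n → p (J t) = K t := by
    intro t ht
    have hD : D (J t) = (t:ℤ) * m - (K t:ℤ) * n := by linarith [hDJ t]
    obtain ⟨b, hb⟩ := ha
    have hdvd : (m:ℤ) ∣ a * D (J t) - (K t : ℤ) := by
      refine ⟨a * t - b * K t, ?_⟩
      have : a * D (J t) - (K t : ℤ) = a * (t:ℤ) * m - (K t:ℤ) * (a * n + 1) := by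
        rw [hD]; ring
      rw [this, hb]; ring
    have hKm : K t < m := by
      have h1 := hKle t
      by_contra hcon
      push_neg at hcon
      have h2 : (m:ℤ) ≤ (K t : ℤ) := by exact_mod_cast hcon
      have h3 : (t:ℤ) ≤ (n:ℤ) - 1 := by
        have : (t:ℤ) < (n:ℤ) := by exact_mod_cast ht
        omega
      have hnZ : (0:ℤ) < n := by exact_mod_cast hn
      nlinarith
    have hmod : (a * D (J t)) % m = (K t : ℤ) := by
      have h1 : (a * D (J t)) % m = (K t : ℤ) % m := Int.ModEq.symm (Int.modEq_iff_dvd.mpr (by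
        simpa using hdvd))
      rw [h1]
      exact Int.emod_eq_of_lt (by positivity) (by exact_mod_cast hKm)
    simp only [hp, hmod, Int.toNat_natCast]
  -- injectivity of J below n
  have hcopZ : IsCoprime (n:ℤ) (m:ℤ) := Nat.isCoprime_iff_coprime.mpr hcop.symm
  have hJinj : ∀ t s, t < n → s < n → J t = J s → t = s := by
    intro t s ht hs heq
    have h1 := hDJ t
    have h2 := hDJ s
    rw [heq] at h1
    have hdvd : (n:ℤ) ∣ ((t:ℤ) - (s:ℤ)) * m := ⟨(K t : ℤ) - (K s : ℤ), by linarith⟩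
    have hdvd2 : (n:ℤ) ∣ ((t:ℤ) - (s:ℤ)) := hcopZ.dvd_of_dvd_mul_right hdvd
    have : ((t:ℤ) - (s:ℤ)) = 0 := by
      refine Int.eq_zero_of_abs_lt_dvd hdvd2 ?_
      have ht' : (t:ℤ) < n := by exact_mod_cast ht
      have hs' : (s:ℤ) < n := by exact_mod_cast hs
      rw [abs_lt]
      constructor <;> omega
    omega
  -- the counting condition
  have hcount : ∀ i : ℕ, 1 ≤ i → i ≤ m →
      i * n ≤ m * (Finset.univ.filter (fun j => p j < i)).card := by
    intro i hi1 him
    set c : ℕ := (i * n - 1) / m + 1 with hc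
    have hin1 : 1 ≤ i * n := Nat.one_le_iff_ne_zero.mpr (by positivity)
    -- each t < c satisfies t * m < i * n
    have htm : ∀ t, t < c → t * m < i * n := by
      intro t ht
      have : t ≤ (i * n - 1) / m := by omega
      have := (Nat.le_div_iff_mul_le hm).mp this
      omega
    have htn : ∀ t, t < c → t < n := by
      intro t ht
      have h1 := htm t ht
      have h2 : i * n ≤ m * n := Nat.mul_le_mul_right n him
      by_contra hcon
      push_neg at hcon
      have : n * m ≤ t * m := Nat.mul_le_mul_right m hcon
      nlinarith
    have hcard : c ≤ (Finset.univ.filter (fun j => p j < i)).card := by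
      have := Finset.card_le_card_of_injOn (fun t => J t)
        (s := Finset.range c) (t := Finset.univ.filter (fun j => p j < i))
        (fun t htc => by
          simp only [Finset.mem_coe, Finset.mem_range] at htc
          simp only [Finset.mem_coe, Finset.mem_filter, Finset.mem_univ, true_and]
          have ht' : t < n := htn t htc
          rw [hpJ t ht']
          have h1 : (K t : ℤ) * n ≤ (t:ℤ) * m := hKle t
          have h2 : t * m < i * n := htm t htc
          have h3 : K t * n ≤ t * m := by exact_mod_cast h1
          have : K t * n < i * n := by omega
          exact Nat.lt_of_mul_lt_mul_right this)
        (fun t htc s hsc heq => by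
          simp only [Finset.coe_range, Set.mem_Iio] at htc hsc
          exact hJinj t s (htn t htc) (htn s hsc) heq)
      simpa using this
    have hic : i * n ≤ m * c := by
      have h1 : (i * n - 1) / m < c := by omega
      have h2 : i * n - 1 < c * m := (Nat.div_lt_iff_lt_mul hm).mp h1
      calc i * n ≤ c * m := by omega
        _ = m * c := Nat.mul_comm c m
    calc i * n ≤ m * c := hic
      _ ≤ m * _ := Nat.mul_le_mul_left m hcard
  refine ⟨⟨hbound, hcount⟩, ⟨fun j => hbound _, fun i h1 h2 => ?_⟩, Tuple.monotone_sort p⟩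
  have hcardeq : (Finset.univ.filter fun j => (p ∘ (Tuple.sort p)) j < i).card
      = (Finset.univ.filter fun j => p j < i).card :=
    Finset.card_equiv (Tuple.sort p) (by intro j; simp)
  rw [hcardeq]
  exact hcount i h1 h2
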